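/- Let k ∈ {0,1,…,d}, m(k,d) = max{d+1, 2(d−k+1)}, and let 𝒞 be a finite family of convex sets in ℝ^d. If dim(⋂𝒞*) ≥ k for every subfamily 𝒞* ⊆ 𝒞 of size at most m(k,d), then dim(⋂𝒞) ≥ k. -/

import Mathlib

set_option linter.unusedSectionVars false

open Module Set Pointwise

namespace Katchalski

variable {E : Type*} [NormedAddCommGroup E] [InnerProductSpace ℝ E] [FiniteDimensional ℝ E]

/-- A convex cone (containing `0`). -/
structure IsCone (C : Set E) : Prop where
  zero_mem : (0:E) ∈ C
  add_mem : ∀ ⦃x⦄, x ∈ C → ∀ ⦃y⦄, y ∈ C → x + y ∈ C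
  smul_mem : ∀ ⦃t:ℝ⦄, 0 ≤ t → ∀ ⦃x⦄, x ∈ C → t • x ∈ C

theorem IsCone.sum_mem {C : Set E} (hC : IsCone C) {ι : Type*} {s : Finset ι} {g : ι → E}
    (h : ∀ i ∈ s, g i ∈ C) : ∑ i ∈ s, g i ∈ C :=
  Finset.sum_induction g (· ∈ C) (fun _ _ ha hb => hC.add_mem ha hb) hC.zero_mem h

theorem isCone_submodule (W : Submodule ℝ E) : IsCone (W : Set E) :=
  ⟨W.zero_mem, fun _ hx _ hy => W.add_mem hx hy, fun t _ _ hx => W.smul_mem t hx⟩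

theorem IsCone.image {C : Set E} (hC : IsCone C) (π : E →ₗ[ℝ] E) : IsCone (π '' C) := by
  refine ⟨⟨0, hC.zero_mem, map_zero π⟩, ?_, ?_⟩
  · rintro x ⟨a, ha, rfl⟩ y ⟨b, hb, rfl⟩
    exact ⟨a + b, hC.add_mem ha hb, map_add π a b⟩
  · rintro t ht x ⟨a, ha, rfl⟩
    exact ⟨t • a, hC.smul_mem ht ha, map_smul π t a⟩

/-- Minkowski sum of a finite family of sets. -/
def setSum {ι : Type*} (s : Finset ι) (f : ι → Set E) : Set E :=
  {x | ∃ g : ι → E, (∀ i ∈ s, g i ∈ f i) ∧ x = ∑ i ∈ s, g i}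

theorem setSum_empty {ι : Type*} (f : ι → Set E) {x : E}
    (hx : x ∈ setSum (∅ : Finset ι) f) : x = 0 := by
  obtain ⟨g, -, rfl⟩ := hx; simp

theorem setSum_subset {ι : Type*} {s : Finset ι} {f : ι → Set E} {M : Set E} (hM : IsCone M)
    (h : ∀ i ∈ s, f i ⊆ M) : setSum s f ⊆ M := by
  rintro x ⟨g, hg, rfl⟩
  exact hM.sum_mem fun i hi => h i hi (hg i hi)

theorem subset_setSum {ι : Type*} [DecidableEq ι] {s : Finset ι} {f : ι → Set E}
    (hf : ∀ i ∈ s, (0:E) ∈ f i) {i : ι} (hi : i ∈ s) : f i ⊆ setSum s f := by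
  intro x hx
  refine ⟨fun j => if j = i then x else 0, ?_, ?_⟩
  · intro j hj
    by_cases hji : j = i
    · subst hji; simpa using hx
    · simpa [hji] using hf j hj
  · rw [Finset.sum_ite_eq' s i (fun _ => x)]
    simp [hi]

theorem isCone_setSum {ι : Type*} {s : Finset ι} {f : ι → Set E}
    (hf : ∀ i ∈ s, IsCone (f i)) : IsCone (setSum s f) := by
  refine ⟨⟨0, fun i hi => (hf i hi).zero_mem, by simp⟩, ?_, ?_⟩
  · rintro x ⟨g, hg, rfl⟩ y ⟨g', hg', rfl⟩
    exact ⟨g + g', fun i hi => (hf i hi).add_mem (hg i hi) (hg' i hi),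
      by rw [← Finset.sum_add_distrib]; rfl⟩
  · rintro t ht x ⟨g, hg, rfl⟩
    exact ⟨t • g, fun i hi => (hf i hi).smul_mem ht (hg i hi), by simp [Finset.smul_sum]⟩

/-- Absorption: adding an element of one of the summand cones stays in the sum. -/
theorem setSum_add_mem {ι : Type*} [DecidableEq ι] {s : Finset ι} {f : ι → Set E}
    (hf : ∀ i ∈ s, IsCone (f i)) {x : E} (hx : x ∈ setSum s f) {i : ι} (hi : i ∈ s) {y : E}
    (hy : y ∈ f i) : x + y ∈ setSum s f := by
  obtain ⟨g, hg, rfl⟩ := hx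
  refine ⟨Function.update g i (g i + y), fun j hj => ?_, ?_⟩
  · by_cases hji : j = i
    · subst hji; rw [Function.update_self]; exact (hf j hj).add_mem (hg j hj) hy
    · rw [Function.update_of_ne hji]; exact hg j hj
  · rw [Finset.sum_update_of_mem hi]
    have h2 : ∑ j ∈ s, g j = g i + ∑ j ∈ s \ {i}, g j := by
      rw [← Finset.sum_erase_add s g hi, Finset.sdiff_singleton_eq_erase]
      abel
    rw [h2]
    abel

theorem setSum_union_mem {ι : Type*} [DecidableEq ι] {A B : Finset ι} {f : ι → Set E}
    (hAB : Disjoint A B) {x y : E} (hx : x ∈ setSum A f) (hy : y ∈ setSum B f) :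
    x + y ∈ setSum (A ∪ B) f := by
  obtain ⟨g, hg, rfl⟩ := hx
  obtain ⟨g', hg', rfl⟩ := hy
  refine ⟨fun i => if i ∈ A then g i else g' i, fun i hi => ?_, ?_⟩
  · rcases Finset.mem_union.1 hi with h | h
    · simpa [h] using hg i h
    · have : i ∉ A := Finset.disjoint_right.1 hAB h
      simpa [this] using hg' i h
  · rw [Finset.sum_union hAB]
    congr 1
    · exact Finset.sum_congr rfl fun i hi => by simp [hi]
    · refine Finset.sum_congr rfl fun i hi => ?_
      have : i ∉ A := Finset.disjoint_right.1 hAB hi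
      simp [this]

theorem image_setSum {ι : Type*} {s : Finset ι} {f : ι → Set E} (π : E →ₗ[ℝ] E) :
    setSum s (fun i => π '' f i) = π '' setSum s f := by
  classical
  ext x
  constructor
  · rintro ⟨g, hg, rfl⟩
    choose g' hg'1 hg'2 using fun i (hi : i ∈ s) => hg i hi
    set q : ι → E := fun i => if h : i ∈ s then g' i h else 0 with hq
    refine ⟨∑ i ∈ s, q i, ⟨q, fun i hi => by simp only [hq, dif_pos hi]; exact hg'1 i hi, rfl⟩, ?_⟩
    rw [map_sum]
    refine Finset.sum_congr rfl fun i hi => ?_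
    simp only [hq, dif_pos hi]
    exact hg'2 i hi
  · rintro ⟨q, ⟨g, hg, rfl⟩, rfl⟩
    refine ⟨fun i => π (g i), fun i hi => ⟨g i, hg i hi, rfl⟩, by rw [map_sum]⟩

/-- The span of a cone, as a set, is the set of differences. -/
theorem IsCone.coe_span {C : Set E} (hC : IsCone C) :
    (Submodule.span ℝ C : Set E) = {x | ∃ a ∈ C, ∃ b ∈ C, x = a - b} := by
  set U : Submodule ℝ E :=
    { carrier := {x | ∃ a ∈ C, ∃ b ∈ C, x = a - b}
      zero_mem' := ⟨0, hC.zero_mem, 0, hC.zero_mem, by simp⟩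
      add_mem' := by
        rintro x y ⟨a, ha, b, hb, rfl⟩ ⟨a', ha', b', hb', rfl⟩
        exact ⟨a + a', hC.add_mem ha ha', b + b', hC.add_mem hb hb', by abel⟩
      smul_mem' := by
        rintro t x ⟨a, ha, b, hb, rfl⟩
        rcases le_or_gt 0 t with ht | ht
        · exact ⟨t • a, hC.smul_mem ht ha, t • b, hC.smul_mem ht hb, by rw [smul_sub]⟩
        · refine ⟨(-t) • b, hC.smul_mem (by linarith) hb, (-t) • a, hC.smul_mem (by linarith) ha, ?_⟩
          rw [smul_sub, neg_smul, neg_smul]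
          abel } with hU
  have h1 : Submodule.span ℝ C ≤ U := Submodule.span_le.2 fun a ha =>
    ⟨a, ha, 0, hC.zero_mem, by simp⟩
  have h2 : (U : Set E) ⊆ (Submodule.span ℝ C : Set E) := by
    rintro x ⟨a, ha, b, hb, rfl⟩
    exact sub_mem (Submodule.subset_span ha) (Submodule.subset_span hb)
  exact le_antisymm h1 h2 ▸ rfl

/-- Every set has a finite subset with the same span. -/
theorem exists_finset_span (s : Set E) :
    ∃ T : Finset E, ↑T ⊆ s ∧ Submodule.span ℝ (T : Set E) = Submodule.span ℝ s := by
  obtain ⟨b, hbs, hspan, hli⟩ := exists_linearIndependent ℝ s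
  have hfin : b.Finite := hli.setFinite
  exact ⟨hfin.toFinset, by simpa using hbs, by rw [Set.Finite.coe_toFinset]; exact hspan⟩

/-- A cone has a "relative interior point": a point `z` such that for any `x` in the cone,
`z - ε • x` stays in the cone for small `ε > 0`. -/
theorem IsCone.exists_inner_point {C : Set E} (hC : IsCone C) :
    ∃ z ∈ C, ∀ x ∈ C, ∃ δ : ℝ, 0 < δ ∧ ∀ ε : ℝ, 0 < ε → ε ≤ δ → z - ε • x ∈ C := by
  obtain ⟨T, hTC, hTspan⟩ := exists_finset_span C
  refine ⟨∑ t ∈ T, t, hC.sum_mem fun t ht => hTC ht, ?_⟩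
  intro x hx
  have hxspan : x ∈ Submodule.span ℝ (T : Set E) := hTspan ▸ Submodule.subset_span hx
  obtain ⟨a, -, ha⟩ := Submodule.mem_span_finset.1 hxspan
  refine ⟨(1 + ∑ t ∈ T, |a t|)⁻¹, inv_pos.2 (by positivity), ?_⟩
  intro ε hε hεδ
  have key : ∑ t ∈ T, t - ε • x = ∑ t ∈ T, (1 - ε * a t) • t := by
    rw [← ha, Finset.smul_sum, ← Finset.sum_sub_distrib]
    refine Finset.sum_congr rfl fun t _ => ?_
    rw [sub_smul, one_smul, smul_smul]
  rw [key]
  refine hC.sum_mem fun t ht => hC.smul_mem ?_ (hTC ht)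
  have h1 : |a t| ≤ ∑ u ∈ T, |a u| := Finset.single_le_sum (fun u _ => abs_nonneg (a u)) ht
  have h2 : ε * a t ≤ ε * |a t| := by
    have := le_abs_self (a t); nlinarith
  have h3 : ε * |a t| ≤ 1 := by
    have hS : (0:ℝ) ≤ ∑ u ∈ T, |a u| := Finset.sum_nonneg fun u _ => abs_nonneg (a u)
    have : ε * |a t| ≤ (1 + ∑ u ∈ T, |a u|)⁻¹ * (1 + ∑ u ∈ T, |a u|) := by
      apply mul_le_mul hεδ (by linarith) (abs_nonneg _) (by positivity)
    rwa [inv_mul_cancel₀ (by positivity)] at this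
  linarith

/-- Affine Radon-type relation: many points in a small subspace admit a nontrivial affine
dependence. -/
theorem exists_relation {ι : Type*} (s : Finset ι) (z : ι → E) (W : Submodule ℝ E)
    (hz : ∀ i ∈ s, z i ∈ W) (hcard : Module.finrank ℝ W + 2 ≤ s.card) :
    ∃ c : ι → ℝ, (∑ i ∈ s, c i = 0) ∧ (∑ i ∈ s, c i • z i = 0) ∧ ∃ i ∈ s, c i ≠ 0 := by
  classical
  set zW : ↥s → W := fun i => ⟨z i, hz i i.2⟩ with hzW
  set ψ : (↥s → ℝ) →ₗ[ℝ] W × ℝ :=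
    { toFun := fun c => (∑ i : ↥s, c i • zW i, ∑ i : ↥s, c i)
      map_add' := by
        intro c c'
        simp [add_smul, Finset.sum_add_distrib, Prod.ext_iff]
      map_smul' := by
        intro t c
        simp [smul_smul, Finset.smul_sum, Finset.mul_sum, Prod.ext_iff] } with hψ
  have hnoninj : ¬ Function.Injective ψ := by
    intro hinj
    have := LinearMap.finrank_le_finrank_of_injective hinj
    rw [Module.finrank_prod, Module.finrank_self] at this
    have hpi : Module.finrank ℝ (↥s → ℝ) = s.card := by
      rw [Module.finrank_fintype_fun_eq_card, Fintype.card_coe]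
    omega
  rw [← LinearMap.ker_eq_bot] at hnoninj
  obtain ⟨c₀, hc₀ker, hc₀ne⟩ := Submodule.exists_mem_ne_zero_of_ne_bot hnoninj
  have hψc₀ : ψ c₀ = 0 := hc₀ker
  have h1 : (∑ i : ↥s, c₀ i • zW i) = 0 := congrArg Prod.fst hψc₀
  have h2 : (∑ i : ↥s, c₀ i) = 0 := congrArg Prod.snd hψc₀
  set c : ι → ℝ := fun i => if h : i ∈ s then c₀ ⟨i, h⟩ else 0 with hc
  have hrestr : ∀ (f : ι → ℝ → E → Prop), True := fun _ => trivial
  refine ⟨c, ?_, ?_, ?_⟩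
  · rw [← Finset.sum_attach s c]
    rw [← h2, Finset.univ_eq_attach]
    exact Finset.sum_congr rfl fun i _ => by simp [hc]
  · rw [← Finset.sum_attach s (fun i => c i • z i)]
    have : ∀ i : ↥s, c ↑i • z ↑i = ((c₀ i • zW i : W) : E) := by
      intro i; simp [hc, hzW]
    rw [Finset.univ_eq_attach] at h1
    calc ∑ i ∈ s.attach, c ↑i • z ↑i = ∑ i ∈ s.attach, ((c₀ i • zW i : W) : E) :=
          Finset.sum_congr rfl fun i _ => this i
      _ = ((∑ i ∈ s.attach, c₀ i • zW i : W) : E) := by rw [Submodule.coe_sum]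
      _ = 0 := by rw [h1]; rfl
  · have : ∃ i : ↥s, c₀ i ≠ 0 := by
      by_contra hall
      push_neg at hall
      exact hc₀ne (funext fun i => hall i)
    obtain ⟨i, hi⟩ := this
    exact ⟨↑i, i.2, by simpa [hc, i.2] using hi⟩

/-- Projection along a subspace `V`. -/
theorem exists_proj (V : Submodule ℝ E) :
    ∃ π : E →ₗ[ℝ] E, (∀ x ∈ V, π x = 0) ∧ (∀ x, π x = 0 → x ∈ V) ∧
      (∀ x, π x ∈ Vᗮ) ∧ (∀ x, x - π x ∈ V) := by
  have hc : IsCompl V Vᗮ := Submodule.isCompl_orthogonal_of_hasOrthogonalProjection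
  set π : E →ₗ[ℝ] E := LinearMap.id - V.subtype ∘ₗ V.projectionOnto Vᗮ hc with hπ
  have happ : ∀ x, π x = x - (V.projectionOnto Vᗮ hc x : E) := fun x => rfl
  refine ⟨π, ?_, ?_, ?_, ?_⟩
  · intro x hx
    rw [happ]
    have : V.projectionOnto Vᗮ hc x = ⟨x, hx⟩ :=
      Submodule.projectionOnto_apply_left hc ⟨x, hx⟩
    rw [this]; simp
  · intro x hx
    rw [happ] at hx
    have : x = (V.projectionOnto Vᗮ hc x : E) := by
      have := sub_eq_zero.1 hx; exact this
    rw [this]; exact (V.projectionOnto Vᗮ hc x).2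
  · intro x
    have hdec := Submodule.projection_add_projection_eq_self hc x
    rw [happ]
    have : x - (V.projectionOnto Vᗮ hc x : E) = (Vᗮ.projectionOnto V hc.symm x : E) :=
      sub_eq_iff_eq_add'.2 hdec.symm
    rw [this]
    exact (Vᗮ.projectionOnto V hc.symm x).2
  · intro x
    rw [happ]
    have : x - (x - (V.projectionOnto Vᗮ hc x : E)) = (V.projectionOnto Vᗮ hc x : E) := by
      abel
    rw [this]
    exact (V.projectionOnto Vᗮ hc x).2

/-- Rank bound: the dimension of `U` is at most that of its image plus that of a subspace
containing the kernel directions. -/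
theorem finrank_le_map_add (π : E →ₗ[ℝ] E) (U V : Submodule ℝ E) (hker : ∀ x, π x = 0 → x ∈ V) :
    Module.finrank ℝ U ≤ Module.finrank ℝ (U.map π) + Module.finrank ℝ V := by
  have hrn := LinearMap.finrank_range_add_finrank_ker (π.domRestrict U)
  rw [LinearMap.range_domRestrict] at hrn
  have hinj : Function.Injective (fun x : LinearMap.ker (π.domRestrict U) =>
      (⟨(x : U), hker _ x.2⟩ : V)) := by
    intro a b hab
    have : ((a : U) : E) = ((b : U) : E) := congrArg (fun y : V => (y : E)) hab
    exact Subtype.ext (Subtype.ext this)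
  have hlin : Module.finrank ℝ (LinearMap.ker (π.domRestrict U)) ≤ Module.finrank ℝ V := by
    set f : LinearMap.ker (π.domRestrict U) →ₗ[ℝ] V :=
      { toFun := fun x => ⟨(x : U), hker _ x.2⟩
        map_add' := fun a b => by ext; simp
        map_smul' := fun t a => by ext; simp }
    exact LinearMap.finrank_le_finrank_of_injective (f := f) hinj
  omega

theorem mem_setSum_singleton {ι : Type*} {K : ι → Set E} {l : ι} {x : E} (hx : x ∈ K l) :
    x ∈ setSum ({l} : Finset ι) K := by
  refine ⟨fun _ => x, fun i hi => ?_, by simp⟩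
  rw [Finset.mem_singleton] at hi; subst hi; exact hx

/-- If a positive combination of inner points of the cones vanishes, then the Minkowski sum of
the cones is a linear subspace. -/
theorem setSum_submodule {ι : Type*} (K : ι → Set E) (T : Finset ι)
    (hcone : ∀ i ∈ T, IsCone (K i)) (c : ι → ℝ) (hcpos : ∀ i ∈ T, 0 < c i) (z : ι → E)
    (hz : ∀ i ∈ T, z i ∈ K i)
    (hzin : ∀ i ∈ T, ∀ x ∈ K i, ∃ δ : ℝ, 0 < δ ∧ ∀ ε : ℝ, 0 < ε → ε ≤ δ → z i - ε • x ∈ K i)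
    (hrel : ∑ i ∈ T, c i • z i = 0) (hTne : T.Nonempty) :
    ∃ U : Submodule ℝ E, (U : Set E) = setSum T K := by
  classical
  have hQ : IsCone (setSum T K) := isCone_setSum hcone
  have hneg : ∀ x ∈ setSum T K, -x ∈ setSum T K := by
    rintro x ⟨g, hg, rfl⟩
    have hδex : ∀ i : ι, ∃ δ : ℝ, i ∈ T →
        (0 < δ ∧ ∀ ε : ℝ, 0 < ε → ε ≤ δ → z i - ε • g i ∈ K i) := by
      intro i
      by_cases hi : i ∈ T
      · obtain ⟨δ, hδ⟩ := hzin i hi (g i) (hg i hi)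
        exact ⟨δ, fun _ => hδ⟩
      · exact ⟨1, fun h => absurd h hi⟩
    choose δ hδ using hδex
    set ε : ℝ := T.inf' hTne (fun i => c i * δ i) with hε
    have hεpos : 0 < ε := by
      rw [hε, Finset.lt_inf'_iff]
      intro i hi
      exact mul_pos (hcpos i hi) ((hδ i hi).1)
    have hmem : ∑ i ∈ T, c i • (z i - (ε / c i) • g i) ∈ setSum T K := by
      refine ⟨fun i => c i • (z i - (ε / c i) • g i), fun i hi => ?_, rfl⟩
      refine (hcone i hi).smul_mem (hcpos i hi).le ?_
      refine (hδ i hi).2 (ε / c i) (div_pos hεpos (hcpos i hi)) ?_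
      rw [div_le_iff₀ (hcpos i hi)]
      calc ε ≤ c i * δ i := Finset.inf'_le (fun i => c i * δ i) hi
        _ = δ i * c i := mul_comm _ _
    have hcalc : ∑ i ∈ T, c i • (z i - (ε / c i) • g i) = -(ε • ∑ i ∈ T, g i) := by
      have step : ∀ i ∈ T, c i • (z i - (ε / c i) • g i) = c i • z i - ε • g i := by
        intro i hi
        rw [smul_sub, smul_smul, mul_div_cancel₀ _ (ne_of_gt (hcpos i hi))]
      rw [Finset.sum_congr rfl step, Finset.sum_sub_distrib, hrel, zero_sub, ← Finset.smul_sum]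
    rw [hcalc] at hmem
    have hx2 : -(∑ i ∈ T, g i) = ε⁻¹ • (-(ε • ∑ i ∈ T, g i)) := by
      rw [smul_neg, smul_smul, inv_mul_cancel₀ hεpos.ne', one_smul]
    rw [hx2]
    exact hQ.smul_mem (inv_nonneg.2 hεpos.le) hmem
  refine ⟨{ carrier := setSum T K
            add_mem' := fun ha hb => hQ.add_mem ha hb
            zero_mem' := hQ.zero_mem
            smul_mem' := ?_ }, rfl⟩
  intro t x hx
  rcases le_or_gt 0 t with h | h
  · exact hQ.smul_mem h hx
  · have h2 : -x ∈ setSum T K := hneg x hx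
    have : t • x = (-t) • (-x) := by rw [neg_smul, smul_neg, neg_neg]
    rw [this]
    exact hQ.smul_mem (by linarith) h2

/-- The key combinatorial cone lemma. -/
theorem cone_lemma : ∀ (D : ℕ) {ι : Type*} (K : ι → Set E) (s : Finset ι) (κ : ℕ), 1 ≤ κ →
    ∀ W : Submodule ℝ E, Module.finrank ℝ W ≤ D →
    (∀ i ∈ s, IsCone (K i)) → (∀ i ∈ s, K i ⊆ (W : Set E)) →
    (∀ i ∈ s, κ ≤ Module.finrank ℝ (Submodule.span ℝ (K i))) →
    (∀ S S' : Finset ι, S ⊆ s → S' ⊆ s → Disjoint S S' →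
      setSum S K ∩ setSum S' K ⊆ {0}) →
    s.card ≤ max (D + 1) (2 * (D + 1 - κ)) := by
  intro D
  induction D using Nat.strong_induction_on with
  | _ D IH =>
  intro ι K s κ hκ W hWD hcone hsub hdim hcond
  classical
  by_contra hbig
  push_neg at hbig
  have hs2 : D + 2 ≤ s.card := by
    have := le_max_left (D+1) (2*(D+1-κ)); omega
  obtain ⟨s₀, hs₀s, hs₀card⟩ := Finset.exists_subset_card_eq hs2
  have hzex : ∀ i : ι, ∃ zi : E, i ∈ s → (zi ∈ K i ∧ ∀ x ∈ K i,
      ∃ δ : ℝ, 0 < δ ∧ ∀ ε : ℝ, 0 < ε → ε ≤ δ → zi - ε • x ∈ K i) := by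
    intro i
    by_cases hi : i ∈ s
    · obtain ⟨z, hz1, hz2⟩ := (hcone i hi).exists_inner_point
      exact ⟨z, fun _ => ⟨hz1, hz2⟩⟩
    · exact ⟨0, fun h => absurd h hi⟩
  choose z hz using hzex
  obtain ⟨c, hc0, hcz, i₀, hi₀s₀, hi₀⟩ := exists_relation s₀ z W
      (fun i hi => hsub i (hs₀s hi) ((hz i (hs₀s hi)).1)) (by omega)
  set A : Finset ι := s₀.filter (fun i => 0 < c i) with hA
  set B : Finset ι := s₀.filter (fun i => c i < 0) with hB
  have hAs₀ : A ⊆ s₀ := Finset.filter_subset _ _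
  have hBs₀ : B ⊆ s₀ := Finset.filter_subset _ _
  have hAs : A ⊆ s := hAs₀.trans hs₀s
  have hBs : B ⊆ s := hBs₀.trans hs₀s
  have hABdisj : Disjoint A B := by
    rw [Finset.disjoint_left]
    intro i hiA hiB
    rw [hA, Finset.mem_filter] at hiA
    rw [hB, Finset.mem_filter] at hiB
    linarith [hiA.2, hiB.2]
  have hAne : A.Nonempty := by
    by_contra hA0
    rw [Finset.not_nonempty_iff_eq_empty] at hA0
    have hnonpos : ∀ i ∈ s₀, c i ≤ 0 := by
      intro i hi
      by_contra hpos
      push_neg at hpos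
      have : i ∈ A := by rw [hA, Finset.mem_filter]; exact ⟨hi, hpos⟩
      rw [hA0] at this
      exact absurd this (Finset.notMem_empty i)
    exact hi₀ ((Finset.sum_eq_zero_iff_of_nonpos hnonpos).1 hc0 i₀ hi₀s₀)
  have hBne : B.Nonempty := by
    by_contra hB0
    rw [Finset.not_nonempty_iff_eq_empty] at hB0
    have hnonneg : ∀ i ∈ s₀, 0 ≤ c i := by
      intro i hi
      by_contra hneg
      push_neg at hneg
      have : i ∈ B := by rw [hB, Finset.mem_filter]; exact ⟨hi, hneg⟩
      rw [hB0] at this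
      exact absurd this (Finset.notMem_empty i)
    exact hi₀ ((Finset.sum_eq_zero_iff_of_nonneg hnonneg).1 hc0 i₀ hi₀s₀)
  have hABs₀ : A ∪ B ⊆ s₀ := Finset.union_subset hAs₀ hBs₀
  have hsplit : ∑ i ∈ A, c i • z i + ∑ i ∈ B, c i • z i = 0 := by
    rw [← Finset.sum_union hABdisj]
    rw [Finset.sum_subset hABs₀ ?_]
    · exact hcz
    · intro i hi hni
      have h1 : ¬ 0 < c i := fun h => hni (Finset.mem_union_left _
        (by rw [hA, Finset.mem_filter]; exact ⟨hi, h⟩))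
      have h2 : ¬ c i < 0 := fun h => hni (Finset.mem_union_right _
        (by rw [hB, Finset.mem_filter]; exact ⟨hi, h⟩))
      have : c i = 0 := le_antisymm (not_lt.1 h1) (not_lt.1 h2)
      rw [this, zero_smul]
  set zs : E := ∑ i ∈ A, c i • z i with hzs
  have hzsA : zs ∈ setSum A K := by
    refine ⟨fun i => c i • z i, fun i hi => ?_, rfl⟩
    exact (hcone i (hAs hi)).smul_mem (Finset.mem_filter.1 hi).2.le ((hz i (hAs hi)).1)
  have hzsB : zs ∈ setSum B K := by
    have h3 : zs = ∑ i ∈ B, (-(c i)) • z i := by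
      have h4 : zs = -(∑ i ∈ B, c i • z i) := eq_neg_of_add_eq_zero_left hsplit
      rw [h4, ← Finset.sum_neg_distrib]
      exact Finset.sum_congr rfl fun i _ => by rw [neg_smul]
    rw [h3]
    refine ⟨fun i => (-(c i)) • z i, fun i hi => ?_, rfl⟩
    exact (hcone i (hBs hi)).smul_mem (by have := (Finset.mem_filter.1 hi).2; linarith)
      ((hz i (hBs hi)).1)
  have hzs0 : zs = 0 := hcond A B hAs hBs hABdisj ⟨hzsA, hzsB⟩
  have hBrel : ∑ i ∈ B, (-(c i)) • z i = 0 := by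
    have h4 : ∑ i ∈ B, c i • z i = 0 := by
      have h5 := hsplit
      rw [hzs0] at h5
      simpa using h5
    rw [show ∑ i ∈ B, (-(c i)) • z i = -(∑ i ∈ B, c i • z i) by
      rw [← Finset.sum_neg_distrib]; exact Finset.sum_congr rfl fun i _ => by rw [neg_smul]]
    rw [h4, neg_zero]
  obtain ⟨UA, hUA⟩ := setSum_submodule K A (fun i hi => hcone i (hAs hi)) c
    (fun i hi => (Finset.mem_filter.1 hi).2) z (fun i hi => (hz i (hAs hi)).1)
    (fun i hi => (hz i (hAs hi)).2) (by rw [← hzs]; exact hzs0) hAne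
  obtain ⟨UB, hUB⟩ := setSum_submodule K B (fun i hi => hcone i (hBs hi)) (fun i => -(c i))
    (fun i hi => by have := (Finset.mem_filter.1 hi).2; show (0:ℝ) < -(c i); linarith) z
    (fun i hi => (hz i (hBs hi)).1) (fun i hi => (hz i (hBs hi)).2) hBrel hBne
  set a := Module.finrank ℝ UA with ha
  set b := Module.finrank ℝ UB with hb
  have hUAW : UA ≤ W := by
    intro x hx
    have hx' : x ∈ setSum A K := by rw [← hUA]; exact hx
    exact setSum_subset (isCone_submodule W) (fun i hi => hsub i (hAs hi)) hx'
  have hUBW : UB ≤ W := by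
    intro x hx
    have hx' : x ∈ setSum B K := by rw [← hUB]; exact hx
    exact setSum_subset (isCone_submodule W) (fun i hi => hsub i (hBs hi)) hx'
  have hκa : κ ≤ a := by
    obtain ⟨i₁, hi₁⟩ := hAne
    have hsp : Submodule.span ℝ (K i₁) ≤ UA := by
      rw [Submodule.span_le, hUA]
      exact subset_setSum (fun i hi => (hcone i (hAs hi)).zero_mem) hi₁
    exact le_trans (hdim i₁ (hAs hi₁)) (Submodule.finrank_mono hsp)
  have hκb : κ ≤ b := by
    obtain ⟨i₁, hi₁⟩ := hBne
    have hsp : Submodule.span ℝ (K i₁) ≤ UB := by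
      rw [Submodule.span_le, hUB]
      exact subset_setSum (fun i hi => (hcone i (hBs hi)).zero_mem) hi₁
    exact le_trans (hdim i₁ (hBs hi₁)) (Submodule.finrank_mono hsp)
  have hab_bot : UA ⊓ UB = ⊥ := by
    rw [eq_bot_iff]
    intro x hx
    obtain ⟨h1, h2⟩ := Submodule.mem_inf.1 hx
    have hx0 : x ∈ ({0} : Set E) := hcond A B hAs hBs hABdisj
      ⟨by rw [← hUA]; exact h1, by rw [← hUB]; exact h2⟩
    rw [Set.mem_singleton_iff] at hx0
    rw [hx0]; exact Submodule.zero_mem ⊥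
  set V := UA ⊔ UB with hV
  have hVfin : Module.finrank ℝ V = a + b := by
    have h5 := Submodule.finrank_sup_add_finrank_inf_eq UA UB
    rw [hab_bot] at h5
    simpa using h5
  have hVW : V ≤ W := sup_le hUAW hUBW
  have hvD : Module.finrank ℝ V ≤ D := le_trans (Submodule.finrank_mono hVW) hWD
  have hcardA : A.card ≤ max (a + 1) (2 * (a + 1 - κ)) := by
    refine IH a (by omega) K A κ hκ UA le_rfl (fun i hi => hcone i (hAs hi))
      (fun i hi => by rw [hUA]; exact subset_setSum (fun j hj => (hcone j (hAs hj)).zero_mem) hi)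
      (fun i hi => hdim i (hAs hi))
      (fun S S' hS hS' hdisj => hcond S S' (hS.trans hAs) (hS'.trans hAs) hdisj)
  have hcardB : B.card ≤ max (b + 1) (2 * (b + 1 - κ)) := by
    refine IH b (by omega) K B κ hκ UB le_rfl (fun i hi => hcone i (hBs hi))
      (fun i hi => by rw [hUB]; exact subset_setSum (fun j hj => (hcone j (hBs hj)).zero_mem) hi)
      (fun i hi => hdim i (hBs hi))
      (fun S S' hS hS' hdisj => hcond S S' (hS.trans hBs) (hS'.trans hBs) hdisj)
  set R : Finset ι := s \ (A ∪ B) with hR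
  have hRs : R ⊆ s := Finset.sdiff_subset
  have hVsubsum : (V : Set E) ⊆ setSum (A ∪ B) K := by
    intro x hx
    rcases Submodule.mem_sup.1 hx with ⟨xa, hxa, xb, hxb, rfl⟩
    exact setSum_union_mem hABdisj (by rw [← hUA]; exact hxa) (by rw [← hUB]; exact hxb)
  obtain ⟨π, hπ0, hπker, hπperp, hπV⟩ := exists_proj V
  have hRAB : Disjoint R (A ∪ B) := Finset.sdiff_disjoint
  have hcondR : ∀ S S' : Finset ι, S ⊆ R → S' ⊆ R → Disjoint S S' →
      setSum S (fun i => π '' K i) ∩ setSum S' (fun i => π '' K i) ⊆ {0} := by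
    intro S S' hS hS' hdisj x hx
    obtain ⟨hx1, hx2⟩ := hx
    rw [image_setSum] at hx1 hx2
    obtain ⟨q, hq, rfl⟩ := hx1
    obtain ⟨q', hq', hqq'⟩ := hx2
    have hdiff : q' - q ∈ V := hπker _ (by rw [map_sub, hqq', sub_self])
    have hq'mem : q' ∈ setSum (S ∪ (A ∪ B)) K := by
      have h6 : q' = q + (q' - q) := by abel
      rw [h6]
      exact setSum_union_mem (hRAB.mono_left hS) hq (hVsubsum hdiff)
    have hdisj2 : Disjoint (S ∪ (A ∪ B)) S' :=
      Finset.disjoint_union_left.2 ⟨hdisj, (hRAB.mono_left hS').symm⟩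
    have hzero : q' ∈ ({0} : Set E) := hcond (S ∪ (A ∪ B)) S'
      (Finset.union_subset (hS.trans hRs) (Finset.union_subset hAs hBs))
      (hS'.trans hRs) hdisj2 ⟨hq'mem, hq'⟩
    rw [Set.mem_singleton_iff] at hzero
    rw [Set.mem_singleton_iff, ← hqq', hzero, map_zero]
  have hKlV : ∀ l ∈ R, ∀ x ∈ K l, x ∈ (V : Set E) → x = 0 := by
    intro l hl x hxK hxV
    have h1 : x ∈ setSum ({l} : Finset ι) K := mem_setSum_singleton hxK
    have h2 : x ∈ setSum (A ∪ B) K := hVsubsum hxV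
    have hld : Disjoint ({l} : Finset ι) (A ∪ B) := by
      rw [Finset.disjoint_left]
      intro i hi
      rw [Finset.mem_singleton] at hi
      subst hi
      exact (Finset.mem_sdiff.1 hl).2
    have := hcond {l} (A ∪ B) (by simpa using hRs hl) (Finset.union_subset hAs hBs) hld ⟨h1, h2⟩
    rwa [Set.mem_singleton_iff] at this
  have hsubWR : ∀ l ∈ R, π '' K l ⊆ ((Vᗮ ⊓ W : Submodule ℝ E) : Set E) := by
    rintro l hl y ⟨x, hx, rfl⟩
    refine Submodule.mem_inf.2 ⟨hπperp x, ?_⟩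
    have hxW : x ∈ W := hsub l (hRs hl) hx
    have h7 : x - π x ∈ W := hVW (hπV x)
    have : π x = x - (x - π x) := by abel
    rw [this]
    exact Submodule.sub_mem W hxW h7
  have hdimR : ∀ l ∈ R, 1 ≤ Module.finrank ℝ (Submodule.span ℝ (π '' K l)) := by
    intro l hl
    have hls : l ∈ s := hRs hl
    have hex : ∃ x ∈ K l, π x ≠ 0 := by
      by_contra hall
      push_neg at hall
      have hKl0 : K l ⊆ {(0:E)} := by
        intro x hx
        have hxV : x ∈ (V : Set E) := hπker x (hall x hx)
        rw [Set.mem_singleton_iff]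
        exact hKlV l hl x hx hxV
      have h0 : Module.finrank ℝ (Submodule.span ℝ (K l)) = 0 := by
        have hle : Submodule.span ℝ (K l) = ⊥ :=
          le_bot_iff.1 (Submodule.span_le.2 (by rw [Submodule.bot_coe]; exact hKl0))
        rw [hle]
        exact finrank_bot ℝ E
      have := hdim l hls
      omega
    obtain ⟨x, hxK, hxπ⟩ := hex
    have hne : Submodule.span ℝ (π '' K l) ≠ ⊥ := by
      intro hbot
      have hmem : π x ∈ Submodule.span ℝ (π '' K l) := Submodule.subset_span ⟨x, hxK, rfl⟩
      rw [hbot, Submodule.mem_bot] at hmem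
      exact hxπ hmem
    have : Module.finrank ℝ (Submodule.span ℝ (π '' K l)) ≠ 0 := fun h0 =>
      hne (Submodule.finrank_eq_zero.1 h0)
    omega
  set WR := (Vᗮ ⊓ W : Submodule ℝ E) with hWRdef
  have hfrWR : Module.finrank ℝ V + Module.finrank ℝ WR = Module.finrank ℝ W :=
    Submodule.finrank_add_inf_finrank_orthogonal hVW
  have hcount : s.card ≤ A.card + B.card + R.card := by
    have hsub2 : s ⊆ (A ∪ B) ∪ R := by
      intro i hi
      by_cases h : i ∈ A ∪ B
      · exact Finset.mem_union_left _ h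
      · exact Finset.mem_union_right _ (Finset.mem_sdiff.2 ⟨hi, h⟩)
    calc s.card ≤ ((A ∪ B) ∪ R).card := Finset.card_le_card hsub2
      _ ≤ (A ∪ B).card + R.card := Finset.card_union_le _ _
      _ ≤ A.card + B.card + R.card := by
          have := Finset.card_union_le A B; omega
  rcases Finset.eq_empty_or_nonempty R with hRe | hRne
  · rw [hRe, Finset.card_empty] at hcount
    omega
  · have hWRrank : 1 ≤ Module.finrank ℝ WR := by
      obtain ⟨l, hl⟩ := hRne
      have hsp : Submodule.span ℝ (π '' K l) ≤ WR := Submodule.span_le.2 (hsubWR l hl)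
      have := hdimR l hl
      have := Submodule.finrank_mono hsp
      omega
    have hcardR : R.card ≤ max (Module.finrank ℝ WR + 1) (2 * (Module.finrank ℝ WR + 1 - 1)) := by
      refine IH (Module.finrank ℝ WR) (by omega) (fun i => π '' K i) R 1 le_rfl WR le_rfl
        (fun i hi => (hcone i (hRs hi)).image π) (fun i hi => hsubWR i hi) hdimR hcondR
    omega

/-- The cone of a set `s` at an apex `p ∈ s`. -/
def coneAt (p : E) (s : Set E) : Set E := {x | ∃ t : ℝ, 0 ≤ t ∧ ∃ y ∈ s, x = t • (y - p)}

theorem isCone_coneAt {p : E} {s : Set E} (hp : p ∈ s) (hs : Convex ℝ s) :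
    IsCone (coneAt p s) := by
  refine ⟨⟨0, le_refl 0, p, hp, by simp⟩, ?_, ?_⟩
  · rintro x ⟨t, ht, y, hy, rfl⟩ x' ⟨t', ht', y', hy', rfl⟩
    rcases eq_or_lt_of_le (add_nonneg ht ht' : (0:ℝ) ≤ t + t') with h0 | hpos
    · have ht0 : t = 0 := by linarith
      have ht'0 : t' = 0 := by linarith
      exact ⟨0, le_refl 0, p, hp, by simp [ht0, ht'0]⟩
    · have hu : 0 ≤ t / (t + t') := div_nonneg ht hpos.le
      have hu' : 0 ≤ t' / (t + t') := div_nonneg ht' hpos.le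
      have huu : t / (t + t') + t' / (t + t') = 1 := by
        rw [← add_div, div_self hpos.ne']
      have hyy : (t / (t + t')) • y + (t' / (t + t')) • y' ∈ s := hs hy hy' hu hu' huu
      refine ⟨t + t', hpos.le, _, hyy, ?_⟩
      have h1 : (t + t') * (t / (t + t')) = t := by field_simp
      have h2 : (t + t') * (t' / (t + t')) = t' := by field_simp
      have hplus : (t + t') • ((t / (t + t')) • y + (t' / (t + t')) • y' - p)
          = t • (y - p) + t' • (y' - p) := by
        rw [smul_sub, smul_add, smul_smul, smul_smul, h1, h2, smul_sub, smul_sub, add_smul]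
        abel
      exact hplus.symm
  · rintro r hr x ⟨t, ht, y, hy, rfl⟩
    exact ⟨r * t, mul_nonneg hr ht, y, hy, by rw [smul_smul]⟩

theorem coneAt_mono {p : E} {s s' : Set E} (h : s ⊆ s') : coneAt p s ⊆ coneAt p s' := by
  rintro x ⟨t, ht, y, hy, rfl⟩
  exact ⟨t, ht, y, h hy, rfl⟩

theorem span_coneAt {p : E} {s : Set E} (hp : p ∈ s) :
    Submodule.span ℝ (coneAt p s) = vectorSpan ℝ s := by
  apply le_antisymm
  · rw [Submodule.span_le]
    rintro x ⟨t, ht, y, hy, rfl⟩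
    have h1 : y - p ∈ vectorSpan ℝ s := by
      rw [vectorSpan_def]
      exact Submodule.subset_span (Set.vsub_mem_vsub hy hp)
    exact Submodule.smul_mem _ t h1
  · rw [vectorSpan_def, Submodule.span_le]
    rintro x hx
    obtain ⟨a, ha, b, hb, rfl⟩ := hx
    have h1 : a - p ∈ coneAt p s := ⟨1, zero_le_one, a, ha, by rw [one_smul]⟩
    have h2 : b - p ∈ coneAt p s := ⟨1, zero_le_one, b, hb, by rw [one_smul]⟩
    have hmem : (a - p) - (b - p) ∈ Submodule.span ℝ (coneAt p s) :=
      sub_mem (Submodule.subset_span h1) (Submodule.subset_span h2)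
    simpa [vsub_eq_sub, sub_sub_sub_cancel_right] using hmem

theorem mem_coneAt_sInter {𝒞 : Finset (Set E)} (hne : 𝒞.Nonempty)
    (hconv : ∀ C ∈ 𝒞, Convex ℝ C) {p : E} (hp : ∀ C ∈ 𝒞, p ∈ C) {x : E}
    (hx : ∀ C ∈ 𝒞, x ∈ coneAt p C) : x ∈ coneAt p (⋂₀ (𝒞 : Set (Set E))) := by
  classical
  by_cases hx0 : x = 0
  · subst hx0
    exact ⟨0, le_refl 0, p, Set.mem_sInter.2 fun C hC => hp C (Finset.mem_coe.1 hC), by simp⟩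
  have hkey : ∀ C : Set E, ∃ tC : ℝ, C ∈ 𝒞 →
      (0 < tC ∧ ∀ u : ℝ, 0 < u → u ≤ tC → p + u • x ∈ C) := by
    intro C
    by_cases hC : C ∈ 𝒞
    · obtain ⟨t, ht, y, hy, hxy⟩ := hx C hC
      have htpos : 0 < t := by
        rcases eq_or_lt_of_le ht with h | h
        · exact absurd (by rw [hxy, ← h, zero_smul]) hx0
        · exact h
      refine ⟨t⁻¹, fun _ => ⟨inv_pos.2 htpos, ?_⟩⟩
      intro u hu hut
      have hut1 : u * t ≤ 1 := by
        have := mul_le_mul_of_nonneg_right hut htpos.le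
        rwa [inv_mul_cancel₀ htpos.ne'] at this
      have h1 : p + u • x = (1 - u * t) • p + (u * t) • y := by
        rw [hxy, smul_smul, smul_sub, sub_smul, one_smul]
        abel
      rw [h1]
      exact hconv C hC (hp C hC) hy (by linarith) (by positivity) (by ring)
    · exact ⟨1, fun h => absurd h hC⟩
  choose tC htC using hkey
  have hupos : 0 < 𝒞.inf' hne tC := (Finset.lt_inf'_iff hne).2 fun C hC => (htC C hC).1
  set u := 𝒞.inf' hne tC with hu
  have humem : p + u • x ∈ ⋂₀ (𝒞 : Set (Set E)) := by
    rw [Set.mem_sInter]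
    intro C hC
    exact (htC C (Finset.mem_coe.1 hC)).2 u hupos (Finset.inf'_le _ (Finset.mem_coe.1 hC))
  refine ⟨u⁻¹, (inv_pos.2 hupos).le, p + u • x, humem, ?_⟩
  rw [add_sub_cancel_left, smul_smul, inv_mul_cancel₀ hupos.ne', one_smul]

end Katchalski

open Katchalski in
/-- Katchalski's dimension Helly theorem: if every subfamily of size at most
`m(k,d) = max {d+1, 2(d-k+1)}` has an intersection of dimension at least `k`,
then so does the whole intersection. (The dimension of a nonempty set is the
dimension of its affine hull.) -/
theorem katchalski_dimension (d k : ℕ) (hkd : k ≤ d)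
    (𝒞 : Finset (Set (EuclideanSpace ℝ (Fin d))))
    (hconv : ∀ C ∈ 𝒞, Convex ℝ C)
    (H : ∀ 𝒞' ⊆ 𝒞, 𝒞'.card ≤ max (d + 1) (2 * (d - k + 1)) →
      (⋂₀ (𝒞' : Set (Set (EuclideanSpace ℝ (Fin d))))).Nonempty ∧
        k ≤ Module.finrank ℝ
          (affineSpan ℝ (⋂₀ (𝒞' : Set (Set (EuclideanSpace ℝ (Fin d)))))).direction) :
    (⋂₀ (𝒞 : Set (Set (EuclideanSpace ℝ (Fin d))))).Nonempty ∧
      k ≤ Module.finrank ℝ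
        (affineSpan ℝ (⋂₀ (𝒞 : Set (Set (EuclideanSpace ℝ (Fin d)))))).direction := by
  classical
  revert hconv H
  induction 𝒞 using Finset.strongInduction with
  | _ 𝒞 IH =>
  intro hconv H
  by_cases hsmall : 𝒞.card ≤ max (d + 1) (2 * (d - k + 1))
  · exact H 𝒞 (Finset.Subset.refl 𝒞) hsmall
  push_neg at hsmall
  have hE : Module.finrank ℝ (EuclideanSpace ℝ (Fin d)) = d := finrank_euclideanSpace_fin
  have hTne : (⋂₀ (𝒞 : Set (Set (EuclideanSpace ℝ (Fin d))))).Nonempty := by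
    apply Convex.helly_theorem_set' hconv
    intro G hG hGcard
    refine (H G hG ?_).1
    rw [hE] at hGcard
    have := le_max_left (d + 1) (2 * (d - k + 1))
    omega
  obtain ⟨p, hp⟩ := hTne
  refine ⟨⟨p, hp⟩, ?_⟩
  rw [direction_affineSpan]
  by_contra hdim
  push_neg at hdim
  have hp_each : ∀ C ∈ 𝒞, p ∈ C := fun C hC => (Set.mem_sInter.1 hp) C hC
  have h𝒞ne : 𝒞.Nonempty := by
    rw [← Finset.card_pos]
    have := le_max_left (d + 1) (2 * (d - k + 1))
    omega
  have hD : ∀ C ∈ 𝒞, (p ∈ ⋂₀ (↑(𝒞.erase C) : Set (Set (EuclideanSpace ℝ (Fin d))))) ∧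
      Convex ℝ (⋂₀ (↑(𝒞.erase C) : Set (Set (EuclideanSpace ℝ (Fin d))))) ∧
      k ≤ Module.finrank ℝ
        (vectorSpan ℝ (⋂₀ (↑(𝒞.erase C) : Set (Set (EuclideanSpace ℝ (Fin d)))))) := by
    intro C hC
    have hss : 𝒞.erase C ⊂ 𝒞 := Finset.erase_ssubset hC
    have hconv' : ∀ C' ∈ 𝒞.erase C, Convex ℝ C' :=
      fun C' hC' => hconv C' (Finset.mem_of_mem_erase hC')
    have hH' := IH _ hss hconv' (fun 𝒮 h𝒮 => H 𝒮 (h𝒮.trans (Finset.erase_subset C 𝒞)))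
    refine ⟨?_, ?_, ?_⟩
    · exact Set.mem_sInter.2 fun X hX =>
        hp_each X (Finset.mem_of_mem_erase (Finset.mem_coe.1 hX))
    · exact convex_sInter fun X hX => hconv' X (Finset.mem_coe.1 hX)
    · have h2 := hH'.2
      rwa [direction_affineSpan] at h2
  set T := ⋂₀ (𝒞 : Set (Set (EuclideanSpace ℝ (Fin d)))) with hT
  have hTconv : Convex ℝ T := convex_sInter fun X hX => hconv X (Finset.mem_coe.1 hX)
  have hKT : IsCone (coneAt p T) := isCone_coneAt hp hTconv
  set L := Submodule.span ℝ (coneAt p T) with hL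
  have hLrank : Module.finrank ℝ L < k := by
    have h7 : L = vectorSpan ℝ T := span_coneAt hp
    exact lt_of_le_of_lt (Submodule.finrank_mono h7.le) hdim
  obtain ⟨π, hπ0, hπker, hπperp, hπV⟩ := exists_proj L
  have hπT : ∀ w ∈ coneAt p T, π w = 0 := fun w hw =>
    hπ0 w (by rw [hL]; exact Submodule.subset_span hw)
  set N : Set (EuclideanSpace ℝ (Fin d)) → Set (EuclideanSpace ℝ (Fin d)) :=
    fun C => coneAt p (⋂₀ (↑(𝒞.erase C) : Set (Set (EuclideanSpace ℝ (Fin d))))) with hN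
  have hNcone : ∀ C ∈ 𝒞, IsCone (N C) := fun C hC =>
    isCone_coneAt (hD C hC).1 (hD C hC).2.1
  have hTsubN : ∀ C ∈ 𝒞, coneAt p T ⊆ N C := by
    intro C hC
    refine coneAt_mono ?_
    intro x hxT
    exact Set.mem_sInter.2 fun X hX => Set.mem_sInter.1 hxT X
      (Finset.mem_coe.2 (Finset.mem_of_mem_erase (Finset.mem_coe.1 hX)))
  have hNsubC : ∀ C ∈ 𝒞, ∀ C' ∈ 𝒞, C ≠ C' → N C ⊆ coneAt p C' := by
    intro C hC C' hC' hne'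
    refine coneAt_mono ?_
    exact Set.sInter_subset_of_mem (Finset.mem_coe.2 (Finset.mem_erase.2 ⟨hne'.symm, hC'⟩))
  have hconelem := cone_lemma (Module.finrank ℝ (Lᗮ)) (fun C => π '' N C) 𝒞
    (k - Module.finrank ℝ L) (by omega) (Lᗮ) le_rfl
    (fun C hC => (hNcone C hC).image π)
    (by rintro C hC y ⟨x, hx, rfl⟩; exact hπperp x)
    (?_ : ∀ C ∈ 𝒞, k - Module.finrank ℝ L ≤
      Module.finrank ℝ (Submodule.span ℝ (π '' N C)))
    ?_
  · have h10 := Submodule.finrank_add_finrank_orthogonal (K := L)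
    omega
  · -- dimension hypothesis
    intro C hC
    have h1 : Submodule.span ℝ (π '' N C) = (Submodule.span ℝ (N C)).map π :=
      Submodule.span_image π
    have h2 := finrank_le_map_add π (Submodule.span ℝ (N C)) L hπker
    have h3 : k ≤ Module.finrank ℝ (Submodule.span ℝ (N C)) := by
      have h8 : Submodule.span ℝ (N C) = vectorSpan ℝ (⋂₀ (↑(𝒞.erase C) :
          Set (Set (EuclideanSpace ℝ (Fin d))))) := span_coneAt (hD C hC).1
      exact le_trans (hD C hC).2.2 (Submodule.finrank_mono h8.ge)
    have h9 : Module.finrank ℝ ((Submodule.span ℝ (N C)).map π) ≤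
        Module.finrank ℝ (Submodule.span ℝ (π '' N C)) := Submodule.finrank_mono h1.ge
    omega
  · -- the intersection condition
    intro S S' hS hS' hdisj x hx
    obtain ⟨hx1, hx2⟩ := hx
    rcases S.eq_empty_or_nonempty with rfl | hSne
    · rw [Set.mem_singleton_iff]
      exact setSum_empty _ hx1
    rcases S'.eq_empty_or_nonempty with rfl | hS'ne
    · rw [Set.mem_singleton_iff]
      exact setSum_empty _ hx2
    rw [image_setSum] at hx1 hx2
    obtain ⟨q, hq, rfl⟩ := hx1
    obtain ⟨q', hq', hqq'⟩ := hx2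
    have hdiffL : q' - q ∈ L := hπker _ (by rw [map_sub, hqq', sub_self])
    have hdiffset : q' - q ∈ {x | ∃ a ∈ coneAt p T, ∃ b ∈ coneAt p T, x = a - b} := by
      rw [← hKT.coe_span, ← hL]
      exact hdiffL
    obtain ⟨a', haT, b', hbT, hab⟩ := hdiffset
    have heq : q + a' = q' + b' := by
      have h4 : q' + b' = a' + q := sub_eq_sub_iff_add_eq_add.1 hab
      rw [h4]
      abel
    obtain ⟨C₀, hC₀⟩ := hSne
    obtain ⟨C₁, hC₁⟩ := hS'ne
    have hy : q + a' ∈ setSum S N :=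
      setSum_add_mem (fun C hC => hNcone C (hS hC)) hq hC₀ (hTsubN C₀ (hS hC₀) haT)
    have hy' : q' + b' ∈ setSum S' N :=
      setSum_add_mem (fun C hC => hNcone C (hS' hC)) hq' hC₁ (hTsubN C₁ (hS' hC₁) hbT)
    have hmemC : ∀ C' ∈ 𝒞, q + a' ∈ coneAt p C' := by
      intro C' hC'
      by_cases hC'S : C' ∈ S
      · have hC'S' : C' ∉ S' := Finset.disjoint_left.1 hdisj hC'S
        have hsub5 : setSum S' N ⊆ coneAt p C' :=
          setSum_subset (isCone_coneAt (hp_each C' hC') (hconv C' hC'))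
            (fun C hC => hNsubC C (hS' hC) C' hC' (fun h => hC'S' (h ▸ hC)))
        rw [heq]
        exact hsub5 hy'
      · have hsub5 : setSum S N ⊆ coneAt p C' :=
          setSum_subset (isCone_coneAt (hp_each C' hC') (hconv C' hC'))
            (fun C hC => hNsubC C (hS hC) C' hC' (fun h => hC'S (h ▸ hC)))
        exact hsub5 hy
    have hyT : q + a' ∈ coneAt p T := mem_coneAt_sInter h𝒞ne hconv hp_each hmemC
    rw [Set.mem_singleton_iff]
    have h6 : q = (q + a') - a' := by abel
    rw [h6, map_sub, hπT _ hyT, hπT _ haT, sub_self]
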